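/- Let $C$ be a symmetrizable generalized Cartan matrix with positive integer symmetrizers $(r_i)$ and let $C(q)$ be the quantized Cartan matrix over $\mathbb{Z}[q, q^{-1}]$ defined by $C_{i,i}(q) = q^{r_i} + q^{-r_i}$ and $C_{i,j}(q) = [C_{i,j}]_q$ for $i \ne j$, where $[l]_q = (q^l - q^{-l})/(q - q^{-1})$. If $r_i \ge -C_{j,i}$ for all $i,j$, then $\det(C(q))$, as a Laurent polynomial in $q$, has leading term $q^R$ and lowest term $q^{-R}$ where $R = \sum_{i} r_i$; in particular $\det(C(q)) \ne 0$. -/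

import Mathlib

open LaurentPolynomial

/-- The quantum integer `[l]_q = (q^l - q^{-l})/(q - q^{-1})`, as a Laurent polynomial
in `ℤ[q^{±1}]`: for `l ≥ 0` it is `q^{l-1} + q^{l-3} + ⋯ + q^{-(l-1)}`, and
`[-l]_q = -[l]_q`. -/
noncomputable def qint (l : ℤ) : LaurentPolynomial ℤ :=
  if 0 ≤ l then ∑ s ∈ Finset.range l.toNat, T (l - 1 - 2 * s)
  else -∑ s ∈ Finset.range (-l).toNat, T (-l - 1 - 2 * s)


lemma usmul_apply (c : ℤˣ) (p : LaurentPolynomial ℤ) (m : ℤ) :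
    (c • p).coeff m = (c : ℤ) * p.coeff m := by
  rw [Units.smul_def, AddMonoidAlgebra.coeff_smul_apply, smul_eq_mul]

lemma mul_coeff_le (f g : LaurentPolynomial ℤ) {a b x : ℤ}
    (hf : ∀ m, a < m → f.coeff m = 0) (hg : ∀ m, b < m → g.coeff m = 0)
    (hx : a + b ≤ x) :
    (f * g).coeff x = if a + b = x then f.coeff a * g.coeff b else 0 := by
  classical
  rw [AddMonoidAlgebra.coeff_mul, Finsupp.sum]
  have key : ∀ a₁ ∈ f.coeff.support,
      (g.coeff.sum fun a₂ b₂ => if a₁ + a₂ = x then f.coeff a₁ * b₂ else 0)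
      = if a₁ = a then (if a + b = x then f.coeff a * g.coeff b else 0) else 0 := by
    intro a₁ h₁
    have ha₁ : a₁ ≤ a := by
      by_contra h; exact (Finsupp.mem_support_iff.mp h₁) (hf a₁ (lt_of_not_ge h))
    rw [Finsupp.sum]
    have key2 : ∀ a₂ ∈ g.coeff.support,
        (if a₁ + a₂ = x then f.coeff a₁ * g.coeff a₂ else 0)
        = if a₂ = b then (if a₁ = a then (if a + b = x then f.coeff a * g.coeff b else 0) else 0) else 0 := by
      intro a₂ h₂
      have ha₂ : a₂ ≤ b := by
        by_contra h; exact (Finsupp.mem_support_iff.mp h₂) (hg a₂ (lt_of_not_ge h))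
      by_cases hc : a₁ + a₂ = x
      · have e1 : a₁ = a := by omega
        have e2 : a₂ = b := by omega
        simp [hc, e1, e2, (by omega : a + b = x)]
      · have h1 : ¬ (a₁ = a) ∨ ¬ (a₂ = b) ∨ ¬ (a + b = x) := by omega
        rcases h1 with h1 | h1 | h1 <;> simp [hc, h1]
    rw [Finset.sum_congr rfl key2, Finset.sum_ite_eq' g.coeff.support b]
    by_cases hb : b ∈ g.coeff.support
    · simp [hb]
    · have hg0 : g.coeff b = 0 := by simpa [Finsupp.mem_support_iff] using hb
      simp [hb, hg0]
  rw [Finset.sum_congr rfl key, Finset.sum_ite_eq' f.coeff.support a]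
  by_cases hfa : a ∈ f.coeff.support
  · simp [hfa]
  · have hf0 : f.coeff a = 0 := by simpa [Finsupp.mem_support_iff] using hfa
    simp [hfa, hf0]

lemma prod_coeff_le {ι : Type*} (s : Finset ι) (f : ι → LaurentPolynomial ℤ) (d : ι → ℤ)
    (hf : ∀ i ∈ s, ∀ m, d i < m → (f i).coeff m = 0) :
    ∀ x : ℤ, (∑ i ∈ s, d i) ≤ x →
      (∏ i ∈ s, f i).coeff x = if (∑ i ∈ s, d i) = x then ∏ i ∈ s, (f i).coeff (d i) else 0 := by
  classical
  induction s using Finset.cons_induction with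
  | empty =>
    intro x hx
    simp only [Finset.prod_empty, Finset.sum_empty]
    rw [show (1 : LaurentPolynomial ℤ) = T 0 from (T_zero).symm, T_apply]
    exact if_congr Iff.rfl rfl rfl
  | cons i s hi ih =>
    intro x hx
    rw [Finset.prod_cons, Finset.sum_cons] at *
    have htail : ∀ m, (∑ j ∈ s, d j) < m → (∏ j ∈ s, f j).coeff m = 0 := by
      intro m hm
      rw [ih (fun j hj => hf j (Finset.mem_cons_of_mem hj)) m (le_of_lt hm)]
      simp [ne_of_lt hm]
    rw [mul_coeff_le _ _ (hf i (Finset.mem_cons_self i s)) htail hx]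
    by_cases hc : d i + ∑ j ∈ s, d j = x
    · rw [if_pos hc, if_pos hc,
        ih (fun j hj => hf j (Finset.mem_cons_of_mem hj)) _ le_rfl, if_pos rfl,
        Finset.prod_cons]
    · rw [if_neg hc, if_neg hc]

lemma qint_coeff_zero {l : ℤ} (hl : l ≤ 0) {m : ℤ} (hm : -l - 1 < m) : (qint l).coeff m = 0 := by
  rcases eq_or_lt_of_le hl with h | h
  · subst h; simp [qint]
  · rw [qint, if_neg (by omega), AddMonoidAlgebra.coeff_neg, Finsupp.neg_apply,
      AddMonoidAlgebra.coeff_sum, Finset.sum_apply']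
    rw [neg_eq_zero]
    apply Finset.sum_eq_zero
    intro s _
    rw [T_apply, if_neg (by omega)]

lemma diag_coeff_zero {a m : ℤ} (ha : 0 < a) (hm : a < m) :
    (T a + T (-a) : LaurentPolynomial ℤ).coeff m = 0 := by
  rw [AddMonoidAlgebra.coeff_add, Finsupp.add_apply, T_apply, T_apply, if_neg (by omega), if_neg (by omega), add_zero]

lemma diag_coeff_top {a : ℤ} (ha : 0 < a) :
    (T a + T (-a) : LaurentPolynomial ℤ).coeff a = 1 := by
  rw [AddMonoidAlgebra.coeff_add, Finsupp.add_apply, T_apply, T_apply, if_pos rfl, if_neg (by omega), add_zero]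

lemma invert_qint (l : ℤ) : invert (qint l) = qint l := by
  have aux : ∀ (k : ℕ) (l : ℤ), (k : ℤ) = l →
      invert (∑ s ∈ Finset.range k, (T (l - 1 - 2 * s) : LaurentPolynomial ℤ))
        = ∑ s ∈ Finset.range k, T (l - 1 - 2 * s) := by
    intro k l hk
    rw [map_sum invert (fun s : ℕ => T (l - 1 - 2 * (s:ℤ))) (Finset.range k)]
    simp only [invert_T]
    refine Eq.trans ?_ (Finset.sum_range_reflect (fun s => T (l - 1 - 2 * (s : ℤ))) k)
    apply Finset.sum_congr rfl
    intro s hs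
    have hs' := Finset.mem_range.mp hs
    congr 1
    omega
  rw [qint]
  split_ifs with h
  · exact aux _ _ (Int.toNat_of_nonneg h)
  · rw [map_neg, aux _ _ (Int.toNat_of_nonneg (by omega))]

lemma main_upper (n : ℕ) (C : Fin n → Fin n → ℤ) (r : Fin n → ℤ)
    (hoff : ∀ i j, i ≠ j → C i j ≤ 0)
    (hrpos : ∀ i, 0 < r i)
    (hbound : ∀ i j, -C j i ≤ r i) (m : ℤ) (hm : (∑ i, r i) ≤ m) :
    (Matrix.det (fun i j : Fin n =>
        if i = j then T (r i) + T (-(r i)) else qint (C i j))).coeff m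
      = if ∑ i, r i = m then 1 else 0 := by
  classical
  set M : Matrix (Fin n) (Fin n) (LaurentPolynomial ℤ) :=
    fun i j => if i = j then T (r i) + T (-(r i)) else qint (C i j) with hMdef
  rw [Matrix.det_apply, AddMonoidAlgebra.coeff_sum, Finset.sum_apply']
  have hterm : ∀ σ : Equiv.Perm (Fin n), σ ∈ Finset.univ →
      (Equiv.Perm.sign σ • ∏ i, M (σ i) i).coeff m
        = if σ = 1 then (if ∑ i, r i = m then 1 else 0) else 0 := by
    intro σ _
    rw [usmul_apply]
    set d : Fin n → ℤ := fun i => if σ i = i then r i else r i - 1 with hd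
    have hbd : ∀ i ∈ Finset.univ, ∀ m', d i < m' → (M (σ i) i).coeff m' = 0 := by
      intro i _ m' hm'
      by_cases h : σ i = i
      · have hd' : d i = r i := by simp [hd, h]
        rw [hd'] at hm'
        simp only [hMdef, M, h, if_pos rfl]
        exact diag_coeff_zero (hrpos i) hm'
      · have hd' : d i = r i - 1 := by simp [hd, h]
        rw [hd'] at hm'
        simp only [hMdef, M, if_neg h]
        have h1 : C (σ i) i ≤ 0 := hoff (σ i) i h
        have h2 : -C (σ i) i ≤ r i := hbound i (σ i)
        exact qint_coeff_zero h1 (by omega)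
    by_cases hσ : σ = 1
    · subst hσ
      have hd1 : ∀ i ∈ Finset.univ, d i = r i := fun i _ => by simp [hd]
      have hsum : ∑ i, d i = ∑ i, r i := Finset.sum_congr rfl hd1
      rw [prod_coeff_le Finset.univ _ d hbd m (hsum ▸ hm), hsum]
      rw [if_pos rfl]
      by_cases hc : ∑ i, r i = m
      · rw [if_pos hc, if_pos hc]
        have : ∀ i ∈ Finset.univ, (M ((1 : Equiv.Perm (Fin n)) i) i).coeff (d i) = 1 := by
          intro i _
          have hdi : d i = r i := by simp [hd]
          simp only [hMdef, M, Equiv.Perm.one_apply, if_pos rfl, hdi]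
          exact diag_coeff_top (hrpos i)
        rw [Finset.prod_congr rfl this, Finset.prod_const_one]
        simp
      · rw [if_neg hc, if_neg hc, mul_zero]
    · obtain ⟨i₀, hi₀⟩ : ∃ i, σ i ≠ i := by
        by_contra h; push_neg at h; exact hσ (Equiv.ext h)
      have hstrict : ∑ i, d i < ∑ i, r i := by
        apply Finset.sum_lt_sum
        · intro i _
          by_cases h : σ i = i <;> simp [hd, h]
        · exact ⟨i₀, Finset.mem_univ _, by simp [hd, hi₀]⟩
      rw [prod_coeff_le Finset.univ _ d hbd m (by omega), if_neg (by omega), mul_zero,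
        if_neg hσ]
  rw [Finset.sum_congr rfl hterm, Finset.sum_ite_eq' Finset.univ (1 : Equiv.Perm (Fin n))]
  simp

lemma det_symm (n : ℕ) (C : Fin n → Fin n → ℤ) (r : Fin n → ℤ) (m : ℤ) :
    (Matrix.det (fun i j : Fin n =>
        if i = j then T (r i) + T (-(r i)) else qint (C i j))).coeff (-m)
      = (Matrix.det (fun i j : Fin n =>
        if i = j then T (r i) + T (-(r i)) else qint (C i j))).coeff m := by
  set M : Matrix (Fin n) (Fin n) (LaurentPolynomial ℤ) :=
    fun i j => if i = j then T (r i) + T (-(r i)) else qint (C i j) with hMdef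
  have hmap : M.map (invert (R := ℤ)).toRingEquiv = M := by
    have : ∀ i j, (invert (R := ℤ)) (M i j) = M i j := by
      intro i j
      simp only [hMdef, M]
      by_cases h : i = j
      · rw [if_pos h, map_add, invert_T, invert_T, neg_neg, add_comm]
      · rw [if_neg h, invert_qint]
    funext i j
    exact this i j
  have h1 : invert (R := ℤ) M.det = M.det := by
    have h2 := RingEquiv.map_det (invert (R := ℤ)).toRingEquiv M
    rw [RingEquiv.mapMatrix_apply, hmap] at h2
    exact h2
  calc M.det.coeff (-m) = (invert (R := ℤ) M.det).coeff m := (invert_apply _ _).symm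
    _ = M.det.coeff m := by rw [h1]

/-- Let `C` be a symmetrizable generalized Cartan matrix with positive
integer symmetrizers `r_i`, and let `C(q)` be the quantized Cartan matrix over
`ℤ[q^{±1}]` with `C_{i,i}(q) = q^{r_i} + q^{-r_i}` and `C_{i,j}(q) = [C_{i,j}]_q` for
`i ≠ j`.  If `r_i ≥ -C_{j,i}` for all `i, j`, then `det C(q)` has leading term `q^R`
and lowest term `q^{-R}` where `R = ∑ r_i` (i.e. its coefficients at `±R` are `1` and
it vanishes beyond `±R`); in particular `det C(q) ≠ 0`. -/
theorem stmt8 (n : ℕ) (C : Fin n → Fin n → ℤ) (r : Fin n → ℤ)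
    (hdiag : ∀ i, C i i = 2)
    (hoff : ∀ i j, i ≠ j → C i j ≤ 0)
    (hzero : ∀ i j, C i j = 0 ↔ C j i = 0)
    (hrpos : ∀ i, 0 < r i)
    (hsym : ∀ i j, r i * C i j = r j * C j i)
    (hbound : ∀ i j, -C j i ≤ r i) :
    ((Matrix.det (fun i j : Fin n =>
        if i = j then T (r i) + T (-(r i)) else qint (C i j))).coeff (∑ i, r i) = 1) ∧
    ((Matrix.det (fun i j : Fin n =>
        if i = j then T (r i) + T (-(r i)) else qint (C i j))).coeff (-(∑ i, r i)) = 1) ∧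
    (∀ m : ℤ, (∑ i, r i) < m →
      (Matrix.det (fun i j : Fin n =>
        if i = j then T (r i) + T (-(r i)) else qint (C i j))).coeff m = 0) ∧
    (∀ m : ℤ, m < -(∑ i, r i) →
      (Matrix.det (fun i j : Fin n =>
        if i = j then T (r i) + T (-(r i)) else qint (C i j))).coeff m = 0) ∧
    Matrix.det (fun i j : Fin n =>
        if i = j then T (r i) + T (-(r i)) else qint (C i j)) ≠ 0 := by
  have htop : (Matrix.det (fun i j : Fin n =>
      if i = j then T (r i) + T (-(r i)) else qint (C i j))).coeff (∑ i, r i) = 1 := by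
    rw [main_upper n C r hoff hrpos hbound _ le_rfl, if_pos rfl]
  have hhigh : ∀ m : ℤ, (∑ i, r i) < m →
      (Matrix.det (fun i j : Fin n =>
        if i = j then T (r i) + T (-(r i)) else qint (C i j))).coeff m = 0 := by
    intro m hm
    rw [main_upper n C r hoff hrpos hbound m (le_of_lt hm), if_neg (by omega)]
  refine ⟨htop, ?_, hhigh, ?_, ?_⟩
  · rw [det_symm n C r]; exact htop
  · intro m hm
    have := det_symm n C r (-m)
    rw [neg_neg] at this
    rw [this]
    exact hhigh (-m) (by omega)
  · intro h
    rw [h] at htop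
    simp at htop
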